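/- arXiv:math/0207236 — 2 statements merged into one kernel-verified Lean document; each statement's English description precedes it below -/
import Mathlib

section
/- For every integer k ≥ 1 and real x ≠ 0, the double series ∑_{n=0}^∞ ∑_{m=0}^∞ (-1)^m (k+n)!(k+n+m)! / (m! n! (2k+n)! (2k+2n+2m+1)!) y^{2m+2n} equals the single series ∑_{p=0}^∞ (-1)^p k (k-1+p)!(k+p)! / (p! (2k+p)! (2k+1+2p)!) y^{2p}, for all real y. -/
open Nat Finset

lemma alt_sum_succ (p : ℕ) (f : ℕ → ℝ) :
    ∑ n ∈ Finset.range (p+2), (-1:ℝ)^n * ((p+1).choose n) * f n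
      = ∑ n ∈ Finset.range (p+1), (-1:ℝ)^n * (p.choose n) * (f n - f (n+1)) := by
  rw [Finset.sum_range_succ' _ (p+1)]
  have h1 : ∀ n ∈ Finset.range (p+1), (-1:ℝ)^(n+1) * ((p+1).choose (n+1)) * f (n+1)
      = -((-1:ℝ)^n * (p.choose n) * f (n+1)) + (-1:ℝ)^(n+1) * (p.choose (n+1)) * f (n+1) := by
    intro n _
    rw [Nat.choose_succ_succ]
    push_cast
    ring
  rw [Finset.sum_congr rfl h1, Finset.sum_add_distrib]
  have h2 : ∑ n ∈ Finset.range (p+1), (-1:ℝ)^(n+1) * (p.choose (n+1)) * f (n+1)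
      = (∑ n ∈ Finset.range (p+2), (-1:ℝ)^n * (p.choose n) * f n) - (-1:ℝ)^0 * (p.choose 0) * f 0 := by
    rw [Finset.sum_range_succ' (fun n => (-1:ℝ)^n * (p.choose n) * f n) (p+1)]
    ring
  rw [h2, Finset.sum_range_succ _ (p+1)]
  simp only [Nat.choose_succ_self, Nat.cast_zero, Nat.choose_zero_right, Nat.cast_one, pow_zero]
  simp only [mul_sub, Finset.sum_sub_distrib, Finset.sum_neg_distrib]
  ring

lemma key (a : ℕ) : ∀ (p d : ℕ),
    ∑ n ∈ Finset.range (p+1), (-1:ℝ)^n * (p.choose n) * (a+n)! / ((a+d+1+n)!)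
      = ((d+p)! * a !) / (d ! * (a+d+1+p)!) := by
  intro p
  induction p with
  | zero =>
    intro d
    have hd : ((d ! : ℕ) : ℝ) ≠ 0 := Nat.cast_ne_zero.mpr (Nat.factorial_ne_zero d)
    have hf : (((a+d+1)! : ℕ) : ℝ) ≠ 0 := Nat.cast_ne_zero.mpr (Nat.factorial_ne_zero _)
    simp only [zero_add, Finset.range_one, Finset.sum_singleton, pow_zero, Nat.choose_self,
      Nat.cast_one, add_zero, one_mul]
    field_simp
  | succ p ih =>
    intro d
    have e : ∀ n ∈ Finset.range (p+2), (-1:ℝ)^n * ((p+1).choose n) * (a+n)! / ((a+d+1+n)!)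
        = (-1:ℝ)^n * ((p+1).choose n) * ((fun m => ((a+m)! : ℝ) / ((a+d+1+m)!)) n) := by
      intro n _; simp [mul_div_assoc]
    rw [Finset.sum_congr rfl e, alt_sum_succ]
    have e2 : ∀ n ∈ Finset.range (p+1),
        (-1:ℝ)^n * (p.choose n) * (((a+n)! : ℝ) / ((a+d+1+n)!) - ((a+(n+1))! : ℝ) / ((a+d+1+(n+1))!))
        = (d+1) * ((-1:ℝ)^n * (p.choose n) * (a+n)! / ((a+(d+1)+1+n)!)) := by
      intro n _
      have h1 : (a+(n+1))! = (a+n+1) * (a+n)! := by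
        rw [show a+(n+1) = (a+n)+1 by ring, Nat.factorial_succ]
      have h2 : (a+d+1+(n+1))! = (a+d+n+2) * (a+d+1+n)! := by
        rw [show a+d+1+(n+1) = (a+d+1+n)+1 by ring, Nat.factorial_succ]
        ring_nf
      have h3 : (a+(d+1)+1+n)! = (a+d+n+2) * (a+d+1+n)! := by
        rw [show a+(d+1)+1+n = (a+d+1+n)+1 by ring, Nat.factorial_succ]
        ring_nf
      rw [h1, h2, h3]
      have hf : ((a+d+1+n)! : ℝ) ≠ 0 := by exact_mod_cast Nat.factorial_ne_zero _
      have hq : ((a+d+n+2 : ℕ) : ℝ) ≠ 0 := by positivity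
      push_cast
      field_simp
      ring
    rw [Finset.sum_congr rfl e2, ← Finset.mul_sum]
    have e3 : ∑ n ∈ Finset.range (p+1), (-1:ℝ)^n * (p.choose n) * (a+n)! / ((a+(d+1)+1+n)!)
        = ((d+1+p)! * a !) / ((d+1)! * (a+(d+1)+1+p)!) := ih (d+1)
    rw [e3]
    have h5 : ((d+1)! : ℝ) = (d+1) * d ! := by push_cast [Nat.factorial_succ]; ring
    have h6 : (d+1+p)! = (d+(p+1))! := by ring_nf
    have h7 : (a+(d+1)+1+p)! = (a+d+1+(p+1))! := by ring_nf
    rw [h5, h6, h7]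
    have hd : ((d:ℕ)! : ℝ) ≠ 0 := by exact_mod_cast Nat.factorial_ne_zero d
    have hf : ((a+d+1+(p+1))! : ℝ) ≠ 0 := by exact_mod_cast Nat.factorial_ne_zero _
    field_simp

lemma coeff_eq (k p : ℕ) (hk : 1 ≤ k) :
    ∑ n ∈ Finset.range (p+1), (-1:ℝ)^(p-n) * (k+n)! * (k+p)! /
        ((p-n)! * n ! * (2*k+n)! * (2*k+2*p+1)!)
      = (-1:ℝ)^p * k * (k-1+p)! * (k+p)! / (p ! * (2*k+p)! * (2*k+1+2*p)!) := by
  have hkey := key k p (k-1)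
  have h2k : k + (k-1) + 1 = 2*k := by omega
  rw [show k + (k-1) + 1 + p = 2*k + p by omega] at hkey
  have e : ∀ n ∈ Finset.range (p+1),
      (-1:ℝ)^(p-n) * (k+n)! * (k+p)! / ((p-n)! * n ! * (2*k+n)! * (2*k+2*p+1)!)
      = ((-1:ℝ)^p * (k+p)! / (p ! * (2*k+2*p+1)!)) *
          ((-1:ℝ)^n * (p.choose n) * (k+n)! / ((k+(k-1)+1+n)!)) := by
    intro n hn
    have hnp : n ≤ p := by simpa using Nat.lt_succ_iff.mp (Finset.mem_range.mp hn)
    rw [show k + (k-1) + 1 + n = 2*k + n by omega]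
    have hsign : (-1:ℝ)^(p-n) = (-1:ℝ)^p * (-1:ℝ)^n := by
      have ha : (-1:ℝ)^(p-n) * (-1:ℝ)^n = (-1:ℝ)^p := by
        rw [← pow_add]; congr 1; omega
      have hb : (-1:ℝ)^n * (-1:ℝ)^n = 1 := by
        rw [← pow_add]; exact Even.neg_one_pow ⟨n, rfl⟩
      calc (-1:ℝ)^(p-n) = (-1:ℝ)^(p-n) * ((-1:ℝ)^n * (-1:ℝ)^n) := by rw [hb, mul_one]
      _ = ((-1:ℝ)^(p-n) * (-1:ℝ)^n) * (-1:ℝ)^n := by ring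
      _ = (-1:ℝ)^p * (-1:ℝ)^n := by rw [ha]
    have hC : ((p.choose n : ℕ) : ℝ) = p ! / (n ! * (p-n)!) := by
      rw [eq_div_iff (by positivity)]
      exact_mod_cast by
        calc p.choose n * (n ! * (p-n)!) = p.choose n * n ! * (p-n)! := by ring
        _ = p ! := Nat.choose_mul_factorial_mul_factorial hnp
    rw [hsign, hC]
    have h1 : ((p-n)! : ℝ) ≠ 0 := by exact_mod_cast Nat.factorial_ne_zero _
    have h2 : ((n)! : ℝ) ≠ 0 := by exact_mod_cast Nat.factorial_ne_zero _
    have h3 : ((2*k+n)! : ℝ) ≠ 0 := by exact_mod_cast Nat.factorial_ne_zero _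
    have h4 : ((2*k+2*p+1)! : ℝ) ≠ 0 := by exact_mod_cast Nat.factorial_ne_zero _
    have h5 : ((p)! : ℝ) ≠ 0 := by exact_mod_cast Nat.factorial_ne_zero _
    field_simp
  rw [Finset.sum_congr rfl e, ← Finset.mul_sum]
  have e2 : ∀ n ∈ Finset.range (p+1),
      (-1:ℝ)^n * (p.choose n) * ((k+n)! / ((k+(k-1)+1+n)! : ℝ))
      = (-1:ℝ)^n * (p.choose n) * (k+n)! / ((k+(k-1)+1+n)!) := by
    intro n _; rw [mul_div_assoc]
  rw [Finset.sum_congr rfl (fun n hn => rfl), hkey]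
  have hkfac : ((k)! : ℝ) = k * ((k-1)! : ℝ) := by
    exact_mod_cast by
      calc k ! = ((k-1)+1)! := by congr 1; omega
      _ = ((k-1)+1) * (k-1)! := Nat.factorial_succ _
      _ = k * (k-1)! := by congr 1; omega
  rw [show 2*k+1+2*p = 2*k+2*p+1 by ring]
  have h1 : (((k-1))! : ℝ) ≠ 0 := by exact_mod_cast Nat.factorial_ne_zero _
  have h2 : ((2*k+p)! : ℝ) ≠ 0 := by exact_mod_cast Nat.factorial_ne_zero _
  have h3 : ((2*k+2*p+1)! : ℝ) ≠ 0 := by exact_mod_cast Nat.factorial_ne_zero _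
  have h5 : ((p)! : ℝ) ≠ 0 := by exact_mod_cast Nat.factorial_ne_zero _
  rw [hkfac]
  field_simp

private noncomputable def Faux (k : ℕ) (y : ℝ) : ℕ × ℕ → ℝ := fun q =>
  (-1 : ℝ) ^ q.2 * (k + q.1)! * (k + q.1 + q.2)! /
    (q.2 ! * q.1 ! * (2 * k + q.1)! * (2 * k + 2 * q.1 + 2 * q.2 + 1)!) *
    y ^ (2 * q.2 + 2 * q.1)

/-- For every integer `k ≥ 1`, the double series
`∑_{n,m≥0} (-1)^m (k+n)!(k+n+m)! / (m! n! (2k+n)! (2k+2n+2m+1)!) y^{2m+2n}`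
equals the single series
`∑_{p≥0} (-1)^p k (k-1+p)!(k+p)! / (p! (2k+p)! (2k+1+2p)!) y^{2p}` for all real `y`. -/
theorem double_series_eq_single_series (k : ℕ) (hk : 1 ≤ k) (y : ℝ) :
    (∑' n : ℕ, ∑' m : ℕ,
      (-1 : ℝ) ^ m * (k + n)! * (k + n + m)! /
        (m ! * n ! * (2 * k + n)! * (2 * k + 2 * n + 2 * m + 1)!) * y ^ (2 * m + 2 * n))
    = ∑' p : ℕ,
      (-1 : ℝ) ^ p * k * (k - 1 + p)! * (k + p)! /
        (p ! * (2 * k + p)! * (2 * k + 1 + 2 * p)!) * y ^ (2 * p) := by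
  have habs : ∀ n m : ℕ,
      |(-1 : ℝ) ^ m * (k + n)! * (k + n + m)! /
        (m ! * n ! * (2 * k + n)! * (2 * k + 2 * n + 2 * m + 1)!) * y ^ (2 * m + 2 * n)|
      = ((k+n)! * (k+n+m)! : ℝ) / (m ! * n ! * (2*k+n)! * (2*k+2*n+2*m+1)!) * (y^2)^(n+m) := by
    intro n m
    rw [abs_mul, abs_div, abs_mul, abs_mul, abs_pow, abs_neg, abs_one, one_pow, one_mul,
      Nat.abs_cast, Nat.abs_cast,
      abs_of_nonneg (show (0:ℝ) ≤ (m ! : ℝ) * n ! * (2*k+n)! * (2*k+2*n+2*m+1)! by positivity),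
      abs_pow, show 2*m+2*n = 2*(n+m) by ring, pow_mul, sq_abs]
  have hF : Summable (Faux k y) := by
    have hG : Summable (fun q : ℕ × ℕ => ((y^2) ^ q.1 / q.1 !) * ((y^2) ^ q.2 / q.2 !)) :=
      Summable.mul_of_nonneg (f := fun n : ℕ => (y^2) ^ n / n !)
        (g := fun n : ℕ => (y^2) ^ n / n !)
        (Real.summable_pow_div_factorial _) (Real.summable_pow_div_factorial _)
        (Pi.le_def.mpr fun n => by positivity) (Pi.le_def.mpr fun n => by positivity)
    refine Summable.of_norm_bounded hG ?_
    rintro ⟨n, m⟩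
    rw [show Faux k y (n, m) = (-1 : ℝ) ^ m * (k + n)! * (k + n + m)! /
        (m ! * n ! * (2 * k + n)! * (2 * k + 2 * n + 2 * m + 1)!) * y ^ (2 * m + 2 * n) from rfl,
      Real.norm_eq_abs, habs n m]
    have hr : (0:ℝ) ≤ (y^2)^(n+m) := by positivity
    have hle : ((k+n)! * (k+n+m)! : ℝ) / (m ! * n ! * (2*k+n)! * (2*k+2*n+2*m+1)!)
        ≤ 1 / (n ! * m !) := by
      rw [div_le_div_iff₀ (by positivity) (by positivity)]
      have hnat : (k+n)! * (k+n+m)! * (n ! * m !)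
          ≤ 1 * (m ! * n ! * (2*k+n)! * (2*k+2*n+2*m+1)!) := by
        have h1 : (k+n)! ≤ (2*k+n)! := Nat.factorial_le (by omega)
        have h2 : (k+n+m)! ≤ (2*k+2*n+2*m+1)! := Nat.factorial_le (by omega)
        calc (k+n)! * (k+n+m)! * (n ! * m !)
            ≤ (2*k+n)! * (2*k+2*n+2*m+1)! * (n ! * m !) :=
              Nat.mul_le_mul (Nat.mul_le_mul h1 h2) le_rfl
          _ = 1 * (m ! * n ! * (2*k+n)! * (2*k+2*n+2*m+1)!) := by ring
      exact_mod_cast hnat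
    calc ((k+n)! * (k+n+m)! : ℝ) / (m ! * n ! * (2*k+n)! * (2*k+2*n+2*m+1)!) * (y^2)^(n+m)
        ≤ 1 / (n ! * m !) * (y^2)^(n+m) := mul_le_mul_of_nonneg_right hle hr
      _ = (y^2)^n / n ! * ((y^2)^m / m !) := by
          rw [pow_add]
          have h1 : ((n)! : ℝ) ≠ 0 := by exact_mod_cast Nat.factorial_ne_zero _
          have h2 : ((m)! : ℝ) ≠ 0 := by exact_mod_cast Nat.factorial_ne_zero _
          field_simp
  have h1 : Summable ((Faux k y) ∘ ⇑(Finset.HasAntidiagonal.sigmaAntidiagonalEquivProd (A := ℕ))) :=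
    Finset.HasAntidiagonal.sigmaAntidiagonalEquivProd.summable_iff.mpr hF
  calc (∑' n : ℕ, ∑' m : ℕ,
      (-1 : ℝ) ^ m * (k + n)! * (k + n + m)! /
        (m ! * n ! * (2 * k + n)! * (2 * k + 2 * n + 2 * m + 1)!) * y ^ (2 * m + 2 * n))
      = ∑' q : ℕ × ℕ, Faux k y q := (Summable.tsum_prod hF).symm
    _ = ∑' s : Σ p : ℕ, { x // x ∈ Finset.HasAntidiagonal.antidiagonal p },
          Faux k y (Finset.HasAntidiagonal.sigmaAntidiagonalEquivProd s) :=
        (Finset.HasAntidiagonal.sigmaAntidiagonalEquivProd.tsum_eq (Faux k y)).symm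
    _ = ∑' p : ℕ, ∑' x : { x // x ∈ Finset.HasAntidiagonal.antidiagonal p }, Faux k y ↑x := Summable.tsum_sigma h1
    _ = ∑' p : ℕ, ∑ x ∈ Finset.HasAntidiagonal.antidiagonal p, Faux k y x :=
        tsum_congr fun p => Finset.tsum_subtype _ (Faux k y)
    _ = ∑' p : ℕ, ∑ n ∈ Finset.range (p+1), Faux k y (n, p - n) :=
        tsum_congr fun p => Finset.Nat.sum_antidiagonal_eq_sum_range_succ_mk (Faux k y) p
    _ = ∑' p : ℕ, (-1 : ℝ) ^ p * k * (k - 1 + p)! * (k + p)! /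
          (p ! * (2 * k + p)! * (2 * k + 1 + 2 * p)!) * y ^ (2 * p) := by
        refine tsum_congr fun p => ?_
        have e : ∀ n ∈ Finset.range (p+1),
            Faux k y (n, p - n)
            = (-1 : ℝ) ^ (p-n) * (k + n)! * (k + p)! /
              ((p-n)! * n ! * (2 * k + n)! * (2 * k + 2 * p + 1)!) * y ^ (2 * p) := by
          intro n hn
          have hnp : n ≤ p := Nat.lt_succ_iff.mp (Finset.mem_range.mp hn)
          show (-1 : ℝ) ^ (p-n) * (k + n)! * (k + n + (p-n))! /
              ((p-n)! * n ! * (2 * k + n)! * (2 * k + 2 * n + 2 * (p-n) + 1)!) *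
              y ^ (2 * (p-n) + 2 * n) = _
          rw [show k + n + (p-n) = k + p by omega, show 2*k+2*n+2*(p-n)+1 = 2*k+2*p+1 by omega,
            show 2*(p-n)+2*n = 2*p by omega]
        rw [Finset.sum_congr rfl e, ← Finset.sum_mul, coeff_eq k p hk]
end

section
/- For integer k ≥ 1 and real x ≠ 0, F_k(2x) = x² j_k(x)² + x² j_{k-1}(x)² − 2k x j_k(x) j_{k-1}(x), where F_k(y) = k ∑_{p=0}^∞ (-1)^p (k-1+p)!(k+p)! / (p! (2k+p)! (2k+1+2p)!) y^{2k+2p}. -/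
open Nat

/-- `F_k(y) = k ∑_{p≥0} (-1)^p (k-1+p)!(k+p)! / (p! (2k+p)! (2k+1+2p)!) y^{2k+2p}`. -/
noncomputable def Fk (k : ℕ) (y : ℝ) : ℝ :=
  (k : ℝ) * ∑' p : ℕ,
    (-1 : ℝ) ^ p * (k - 1 + p)! * (k + p)! /
      (p ! * (2 * k + p)! * (2 * k + 1 + 2 * p)!) * y ^ (2 * k + 2 * p)

/-- The spherical Bessel function of the first kind, defined by its power series
`j_n(z) = ∑_{m≥0} (-1)^m (n+m)! / (m! (2n+2m+1)! 2^{2m}) (2z)^{n+2m}`. -/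
noncomputable def sphBessel (n : ℕ) (z : ℝ) : ℝ :=
  ∑' m : ℕ,
    (-1 : ℝ) ^ m * (n + m)! / (m ! * (2 * n + 2 * m + 1)! * 2 ^ (2 * m)) * (2 * z) ^ (n + 2 * m)

noncomputable def uu (l m j : ℕ) : ℝ :=
  (l+1+m)! * (l+j)! / ((m)! * (j)! * (2*l+2*m+3)! * (2*l+2*j+1)!)

/-- numerator polynomial of the Zeilberger certificate -/
noncomputable def PP (l p m : ℕ) : ℝ :=
  ((2+18*(p:ℝ)+40*(p:ℝ)^2+24*(p:ℝ)^3+4*((l:ℝ)+1)+72*((l:ℝ)+1)*(p:ℝ)+120*((l:ℝ)+1)*(p:ℝ)^2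
      +48*((l:ℝ)+1)*(p:ℝ)^3+8*((l:ℝ)+1)^2+88*((l:ℝ)+1)^2*(p:ℝ)+80*((l:ℝ)+1)^2*(p:ℝ)^2
      +16*((l:ℝ)+1)^3+32*((l:ℝ)+1)^3*(p:ℝ))*(m:ℝ)
    + (-20-44*(p:ℝ)+16*(p:ℝ)^2+48*(p:ℝ)^3-104*((l:ℝ)+1)-184*((l:ℝ)+1)*(p:ℝ)
      -48*((l:ℝ)+1)*(p:ℝ)^2-128*((l:ℝ)+1)^2-160*((l:ℝ)+1)^2*(p:ℝ)-64*((l:ℝ)+1)^3)*(m:ℝ)^2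
    + (-32-128*(p:ℝ)-128*(p:ℝ)^2-48*((l:ℝ)+1)-128*((l:ℝ)+1)*(p:ℝ))*(m:ℝ)^3
    + (32+64*(p:ℝ)+64*((l:ℝ)+1))*(m:ℝ)^4)

noncomputable def DD (l p : ℕ) : ℝ :=
  ((p:ℝ)+1)*(2*(l:ℝ)+(p:ℝ)+3)*(2*(l:ℝ)+2*(p:ℝ)+3)*(2*(l:ℝ)+2*(p:ℝ)+5)

noncomputable def cc (l p : ℕ) : ℝ := 2*((l:ℝ)+1+(p:ℝ))*(2*(l:ℝ)+2*(p:ℝ)+3)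

noncomputable def rhsC (l p : ℕ) : ℝ :=
  4*((l:ℝ)+1) * (l+p)! * (l+1+p)! * 2^(2*p) / ((p)! * (2*l+2+p)! * (2*l+3+2*p)!)

lemma fact_ne (n : ℕ) : ((n)! : ℝ) ≠ 0 := Nat.cast_ne_zero.mpr (factorial_ne_zero n)

lemma uu_ne (l m j : ℕ) : uu l m j ≠ 0 := by
  unfold uu
  positivity

lemma uu_succ_right (l m j : ℕ) :
    uu l m (j+1)
      = ((l:ℝ)+j+1)/(((j:ℝ)+1)*(2*(l:ℝ)+2*j+2)*(2*(l:ℝ)+2*j+3)) * uu l m j := by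
  have e3 : l + (j+1) = (l+j)+1 := by ring
  have e4 : 2*l+2*(j+1)+1 = ((2*l+2*j+1)+1)+1 := by ring
  simp only [uu, e3, e4, factorial_succ]
  push_cast
  have h1 := fact_ne m
  have h2 := fact_ne j
  have h4 := fact_ne (l+j)
  have h5 := fact_ne (2*l+2*m+3)
  have h6 := fact_ne (2*l+2*j+1)
  have p6 : ((j:ℝ)+1) ≠ 0 := by positivity
  have p11 : (2*(l:ℝ)+2*j+2) ≠ 0 := by positivity
  have p12 : (2*(l:ℝ)+2*j+3) ≠ 0 := by positivity
  field_simp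
  ring

lemma uu_succ_left (l m j : ℕ) :
    uu l (m+1) j
      = ((l:ℝ)+m+2)/(((m:ℝ)+1)*(2*(l:ℝ)+2*m+4)*(2*(l:ℝ)+2*m+5)) * uu l m j := by
  have e1 : l + 1 + (m+1) = (l+1+m)+1 := by ring
  have e2 : 2*l+2*(m+1)+3 = ((2*l+2*m+3)+1)+1 := by ring
  simp only [uu, e1, e2, factorial_succ]
  push_cast
  have h1 := fact_ne m
  have h2 := fact_ne j
  have h4 := fact_ne (l+1+m)
  have h5 := fact_ne (2*l+2*m+3)
  have h6 := fact_ne (2*l+2*j+1)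
  have p6 : ((m:ℝ)+1) ≠ 0 := by positivity
  have p11 : (2*(l:ℝ)+2*m+4) ≠ 0 := by positivity
  have p12 : (2*(l:ℝ)+2*m+5) ≠ 0 := by positivity
  field_simp
  ring

set_option maxHeartbeats 2000000 in
lemma cert (l m j : ℕ) :
    DD l (m+j) * (2*(2*(m:ℝ) - 2*((j:ℝ)+1) + 1)) * uu l m (j+1)
      = cc l (m+j) * (2*(2*(m:ℝ) - 2*(j:ℝ) + 1)) * uu l m j
        + PP l (m+j) (m+1) * uu l (m+1) j - PP l (m+j) m * uu l m (j+1) := by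
  rw [uu_succ_right, uu_succ_left]
  have hu := uu_ne l m j
  have p1 : ((j:ℝ)+1) ≠ 0 := by positivity
  have p2 : (2*(l:ℝ)+2*j+2) ≠ 0 := by positivity
  have p3 : (2*(l:ℝ)+2*j+3) ≠ 0 := by positivity
  have p4 : ((m:ℝ)+1) ≠ 0 := by positivity
  have p5 : (2*(l:ℝ)+2*m+4) ≠ 0 := by positivity
  have p6 : (2*(l:ℝ)+2*m+5) ≠ 0 := by positivity
  simp only [PP, DD, cc]
  push_cast
  field_simp
  ring

lemma PP_zero (l p : ℕ) : PP l p 0 = 0 := by simp [PP]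

lemma edge (l p : ℕ) : PP l p (p+1) = -(2*(2*(p:ℝ)+3)) * DD l p := by
  simp only [PP, DD]
  push_cast
  ring

lemma DD_ne (l p : ℕ) : DD l p ≠ 0 := by
  simp only [DD]
  positivity

noncomputable def SS (l p : ℕ) : ℝ :=
  ∑ m ∈ Finset.range (p+1), 2*(2*(m:ℝ) - 2*((p-m : ℕ):ℝ) + 1) * uu l m (p-m)

lemma rstep (l p : ℕ) : DD l p * rhsC l (p+1) = cc l p * rhsC l p := by
  have e1 : l + (p+1) = (l+p)+1 := by ring
  have e2 : l + 1 + (p+1) = (l+1+p)+1 := by ring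
  have e3 : 2*l+2+(p+1) = ((2*l+2+p))+1 := by ring
  have e4 : 2*l+3+2*(p+1) = ((2*l+3+2*p)+1)+1 := by ring
  have e5 : 2*(p+1) = (2*p)+1+1 := by ring
  unfold rhsC DD cc
  rw [e4, e1, e2, e3, e5]
  simp only [factorial_succ, pow_succ]
  push_cast
  have h1 := fact_ne p
  have h2 := fact_ne (l+p)
  have h3 := fact_ne (l+1+p)
  have h4 := fact_ne (2*l+2+p)
  have h5 := fact_ne (2*l+3+2*p)
  have q1 : ((p:ℝ)+1) ≠ 0 := by positivity
  have q2 : (2*(l:ℝ)+2+(p:ℝ)+1) ≠ 0 := by positivity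
  have q3 : (2*(l:ℝ)+3+2*(p:ℝ)+1) ≠ 0 := by positivity
  have q4 : (2*(l:ℝ)+3+2*(p:ℝ)+1+1) ≠ 0 := by positivity
  have q5 : (2:ℝ) ^ (2*p) ≠ 0 := by positivity
  field_simp
  ring

lemma base (l : ℕ) : 2 * uu l 0 0 = rhsC l 0 := by
  unfold uu rhsC
  have i3 : 2*l+2*0+3 = ((2*l+1)+1)+1 := by omega
  have i4 : 2*l+2*0+1 = 2*l+1 := by omega
  have i5 : 2*l+2+0 = (2*l+1)+1 := by omega
  have i6 : 2*l+3+2*0 = ((2*l+1)+1)+1 := by omega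
  have i1 : l+1+0 = l+1 := by omega
  have i2 : l+0 = l := by omega
  have i7 : 2*0 = 0 := by omega
  rw [i3, i4, i5, i6, i1, i2, i7]
  simp only [factorial_succ, factorial_zero, pow_zero]
  push_cast
  have h1 := fact_ne l
  have h2 := fact_ne (l+1)
  have h3 := fact_ne (2*l+1)
  have q1 : (2*(l:ℝ)+1+1) ≠ 0 := by positivity
  have q2 : (2*(l:ℝ)+1+1+1) ≠ 0 := by positivity
  field_simp
  ring

lemma core (l : ℕ) : ∀ p, SS l p = rhsC l p := by
  intro p
  induction p with
  | zero =>
      have : SS l 0 = 2 * uu l 0 0 := by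
        simp only [SS, Finset.range_one, Finset.sum_singleton]
        norm_num
      rw [this, base]
  | succ p ih =>
      have key : DD l p * SS l (p+1) = cc l p * SS l p := by
        rw [SS, Finset.sum_range_succ, mul_add, Finset.mul_sum]
        have hsum : ∀ m ∈ Finset.range (p+1),
            DD l p * (2*(2*(m:ℝ) - 2*(((p+1)-m : ℕ):ℝ) + 1) * uu l m ((p+1)-m))
              = cc l p * (2*(2*(m:ℝ) - 2*((p-m : ℕ):ℝ) + 1) * uu l m (p-m))
                + ((fun i => PP l p i * uu l i ((p+1)-i)) (m+1)
                   - (fun i => PP l p i * uu l i ((p+1)-i)) m) := by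
          intro m hm
          have hmp : m ≤ p := by
            have := Finset.mem_range.mp hm; omega
          obtain ⟨j, hj⟩ : ∃ j, p = m + j := ⟨p - m, by omega⟩
          subst hj
          have h1 : (m + j + 1) - m = j + 1 := by omega
          have h2 : (m + j) - m = j := by omega
          have h3 : (m + j + 1) - (m + 1) = j := by omega
          simp only [h1, h2, h3]
          push_cast
          have := cert l m j
          rw [← mul_assoc, ← mul_assoc]
          push_cast at this
          linarith [this]
        rw [Finset.sum_congr rfl hsum, Finset.sum_add_distrib,
          Finset.sum_range_sub (fun i => PP l p i * uu l i ((p+1)-i))]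
        have hz : (p+1) - (p+1) = 0 := by omega
        have hz0 : (p+1) - 0 = p+1 := by omega
        simp only [hz, hz0, PP_zero, zero_mul, sub_zero]
        rw [← Finset.mul_sum, ← SS, edge]
        push_cast
        ring
      rw [ih, ← rstep] at key
      exact mul_left_cancel₀ (DD_ne l p) key

/-- coefficient of `x^(n+2m)` in `sphBessel n x` -/
noncomputable def Ac (n m : ℕ) : ℝ := (-1)^m * (n+m)! * 2^n / ((m)! * (2*n+2*m+1)!)

lemma pc (l m j : ℕ) : Ac (l+1) m * Ac l j = (-1)^(m+j) * 2^(2*l+1) * uu l m j := by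
  have e1 : 2*(l+1)+2*m+1 = 2*l+2*m+3 := by omega
  simp only [Ac, uu, e1]
  have h1 := fact_ne m
  have h2 := fact_ne j
  have h5 := fact_ne (2*l+2*m+3)
  have h6 := fact_ne (2*l+2*j+1)
  field_simp
  ring

lemma pb (l m j : ℕ) : Ac l m * Ac l j
    = (-1)^(m+j) * 2^(2*l) * (2*(2*(l:ℝ)+2*m+3)) * uu l m j := by
  have e1 : l+1+m = (l+m)+1 := by omega
  have e2 : 2*l+2*m+3 = ((2*l+2*m+1)+1)+1 := by omega
  simp only [Ac, uu, e1, e2, factorial_succ]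
  push_cast
  have h1 := fact_ne m
  have h2 := fact_ne j
  have h3 := fact_ne (l+m)
  have h5 := fact_ne (2*l+2*m+1)
  have h6 := fact_ne (2*l+2*j+1)
  have q1 : (2*(l:ℝ)+2*m+1+1) ≠ 0 := by positivity
  have q2 : (2*(l:ℝ)+2*m+1+1+1) ≠ 0 := by positivity
  field_simp
  ring

lemma pa (l m j : ℕ) : Ac (l+1) m * Ac (l+1) j
    = (-1)^(m+j) * 2^(2*l+2) * ((j:ℝ)+1) * uu l m (j+1) := by
  have e1 : 2*(l+1)+2*m+1 = 2*l+2*m+3 := by omega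
  have e2 : 2*(l+1)+2*j+1 = 2*l+2*(j+1)+1 := by omega
  have e3 : l+1+j = l+(j+1) := by omega
  have e4 : l+(j+1) = (l+j)+1 := by omega
  have e5 : 2*l+2*(j+1)+1 = ((2*l+2*j+1)+1)+1 := by omega
  simp only [Ac, uu, e1, e2, e3, e4, e5, factorial_succ]
  push_cast
  have h1 := fact_ne m
  have h2 := fact_ne j
  have h3 := fact_ne (l+1+m)
  have h4 := fact_ne (l+j)
  have h5 := fact_ne (2*l+2*m+3)
  have h6 := fact_ne (2*l+2*j+1)
  have q1 : (2*(l:ℝ)+2*j+1+1) ≠ 0 := by positivity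
  have q2 : (2*(l:ℝ)+2*j+1+1+1) ≠ 0 := by positivity
  have q3 : ((j:ℝ)+1) ≠ 0 := by positivity
  field_simp
  ring

/-- coefficient of `x^(2(l+1)+2p)` in `Fk (l+1) (2x)` -/
noncomputable def Fc (l p : ℕ) : ℝ :=
  ((l+1 : ℕ):ℝ) * ((-1)^p * (l+p)! * ((l+1)+p)! /
      ((p)! * (2*(l+1)+p)! * (2*(l+1)+1+2*p)!)) * 2^(2*(l+1)+2*p)

lemma fc_rhs (l P : ℕ) : (-1)^P * 2^(2*l) * rhsC l P = Fc l P := by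
  have e1 : 2*(l+1)+P = 2*l+2+P := by omega
  have e2 : 2*(l+1)+1+2*P = 2*l+3+2*P := by omega
  have e3 : (l+1)+P = l+1+P := rfl
  have e4 : 2*(l+1)+2*P = (2*l+2)+2*P := by omega
  simp only [Fc, rhsC, e1, e2, e3, e4, pow_add]
  push_cast
  have h1 := fact_ne P
  have h2 := fact_ne (2*l+2+P)
  have h3 := fact_ne (2*l+3+2*P)
  field_simp
  ring

/-- Cauchy-product coefficient -/
noncomputable def CP (a b p : ℕ) : ℝ := ∑ q ∈ Finset.HasAntidiagonal.antidiagonal p, Ac a q.1 * Ac b q.2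

lemma coeff0 (l : ℕ) : CP l l 0 - 2*((l:ℝ)+1) * CP (l+1) l 0 = Fc l 0 := by
  rw [← fc_rhs, ← core]
  simp only [CP, Finset.Nat.antidiagonal_zero, Finset.sum_singleton]
  have hb := pb l 0 0
  have hc := pc l 0 0
  rw [hb, hc]
  have : SS l 0 = 2 * uu l 0 0 := by
    simp only [SS, Finset.range_one, Finset.sum_singleton]
    norm_num
  rw [this]
  push_cast
  ring

lemma coeffS (l p : ℕ) :
    CP (l+1) (l+1) p + CP l l (p+1) - 2*((l:ℝ)+1) * CP (l+1) l (p+1) = Fc l (p+1) := by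
  rw [← fc_rhs, ← core]
  simp only [CP, Finset.Nat.sum_antidiagonal_eq_sum_range_succ_mk]
  -- extend the first sum to range (p+2)
  have hext : ∑ m ∈ Finset.range (p+1), Ac (l+1) m * Ac (l+1) (p-m)
      = ∑ m ∈ Finset.range (p+2),
          (-1:ℝ)^(p+1) * 2^(2*l) * (-4*(((p+1)-m : ℕ):ℝ)) * uu l m ((p+1)-m) := by
    conv_rhs => rw [Finset.sum_range_succ]
    have hz : (p+1)-(p+1) = 0 := by omega
    have hlast : (-1:ℝ)^(p+1) * 2^(2*l) * (-4*(((p+1)-(p+1) : ℕ):ℝ)) * uu l (p+1) ((p+1)-(p+1)) = 0 := by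
      rw [hz]
      norm_num
    rw [hlast, add_zero]
    refine Finset.sum_congr rfl fun m hm => ?_
    have hmp : m ≤ p := by have := Finset.mem_range.mp hm; omega
    have h1 : m + (p - m) = p := by omega
    have h2 : (p+1) - m = (p-m)+1 := by omega
    rw [pa l m (p-m), h1, h2]
    push_cast
    ring
  rw [hext, Finset.mul_sum, ← Finset.sum_add_distrib, ← Finset.sum_sub_distrib]
  have hcomb : ∀ m ∈ Finset.range (p+2),
      ((-1:ℝ)^(p+1) * 2^(2*l) * (-4*(((p+1)-m : ℕ):ℝ)) * uu l m ((p+1)-m)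
          + Ac l m * Ac l ((p+1)-m))
        - 2*((l:ℝ)+1) * (Ac (l+1) m * Ac l ((p+1)-m))
      = (-1:ℝ)^(p+1) * 2^(2*l)
          * (2*(2*(m:ℝ) - 2*(((p+1)-m : ℕ):ℝ) + 1) * uu l m ((p+1)-m)) := by
    intro m hm
    have hmp : m ≤ p+1 := by have := Finset.mem_range.mp hm; omega
    have h1 : m + ((p+1) - m) = p+1 := by omega
    rw [pb l m ((p+1)-m), pc l m ((p+1)-m), h1]
    push_cast
    ring
  rw [Finset.sum_congr rfl hcomb, ← Finset.mul_sum, SS]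

lemma sph_eq (n : ℕ) (x : ℝ) : sphBessel n x = ∑' m, Ac n m * x^(n+2*m) := by
  refine tsum_congr fun m => ?_
  rw [Ac, mul_pow, pow_add, pow_mul]
  have h1 := fact_ne m
  have h2 := fact_ne (n+m)
  have h3 := fact_ne (2*n+2*m+1)
  have h4 : (2:ℝ)^(2*m) ≠ 0 := by positivity
  have h5 : ((2:ℝ)^2)^m = 2^(2*m) := by rw [← pow_mul]
  rw [h5]
  field_simp

lemma sph_summable_norm (n : ℕ) (x : ℝ) :
    Summable (fun m => ‖Ac n m * x^(n+2*m)‖) := by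
  have hs : Summable (fun m : ℕ => (2^n * |x|^n) * ((x^2)^m / (m)!)) :=
    (Real.summable_pow_div_factorial (x^2)).mul_left _
  refine Summable.of_nonneg_of_le (fun m => norm_nonneg _) (fun m => ?_) hs
  have hA : |Ac n m| ≤ 2^n / (m)! := by
    rw [Ac, abs_div]
    have hnum : |(-1:ℝ)^m * (n+m)! * 2^n| = (n+m)! * 2^n := by
      rw [abs_mul, abs_mul, abs_pow, abs_neg, abs_one, one_pow, one_mul,
        Nat.abs_cast, abs_of_nonneg (by positivity : (0:ℝ) ≤ 2^n)]
    have hden : |((m)! : ℝ) * (2*n+2*m+1)!| = ((m)! : ℝ) * (2*n+2*m+1)! := by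
      rw [abs_of_nonneg (by positivity)]
    rw [hnum, hden]
    rw [div_le_div_iff₀ (by positivity) (by positivity)]
    have hle : ((n+m)! : ℝ) ≤ (2*n+2*m+1)! := by
      exact_mod_cast Nat.factorial_le (by omega)
    calc ((n+m)! : ℝ) * 2^n * (m)! ≤ ((2*n+2*m+1)! : ℝ) * 2^n * (m)! := by
          have : (0:ℝ) ≤ 2^n * (m)! := by positivity
          nlinarith [this, hle]
      _ = 2^n * ((m)! * (2*n+2*m+1)!) := by ring
  have hxp : |x^(n+2*m)| = |x|^n * (x^2)^m := by
    rw [abs_pow, pow_add, pow_mul, sq_abs]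
  rw [norm_mul, Real.norm_eq_abs, Real.norm_eq_abs, hxp]
  calc |Ac n m| * (|x|^n * (x^2)^m)
      ≤ (2^n / (m)!) * (|x|^n * (x^2)^m) := by
        apply mul_le_mul_of_nonneg_right hA (by positivity)
    _ = (2^n * |x|^n) * ((x^2)^m / (m)!) := by ring

lemma sph_mul (a b : ℕ) (x : ℝ) :
    sphBessel a x * sphBessel b x = ∑' p, CP a b p * x^(a+b+2*p) := by
  rw [sph_eq, sph_eq,
    tsum_mul_tsum_eq_tsum_sum_antidiagonal_of_summable_norm
      (sph_summable_norm a x) (sph_summable_norm b x)]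
  refine tsum_congr fun p => ?_
  rw [CP, Finset.sum_mul]
  refine Finset.sum_congr rfl fun q hq => ?_
  have hq' : q.1 + q.2 = p := Finset.HasAntidiagonal.mem_antidiagonal.mp hq
  have he : a+2*q.1 + (b+2*q.2) = a+b+2*p := by omega
  calc Ac a q.1 * x^(a+2*q.1) * (Ac b q.2 * x^(b+2*q.2))
      = Ac a q.1 * Ac b q.2 * (x^(a+2*q.1) * x^(b+2*q.2)) := by ring
    _ = Ac a q.1 * Ac b q.2 * x^(a+b+2*p) := by rw [← pow_add, he]

lemma sph_mul_summable (a b : ℕ) (x : ℝ) :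
    Summable (fun p => CP a b p * x^(a+b+2*p)) := by
  have h := (summable_norm_sum_mul_antidiagonal_of_summable_norm
    (sph_summable_norm a x) (sph_summable_norm b x)).of_norm
  refine h.congr fun p => ?_
  rw [CP, Finset.sum_mul]
  refine Finset.sum_congr rfl fun q hq => ?_
  have hq' : q.1 + q.2 = p := Finset.HasAntidiagonal.mem_antidiagonal.mp hq
  have he : a+2*q.1 + (b+2*q.2) = a+b+2*p := by omega
  calc Ac a q.1 * x^(a+2*q.1) * (Ac b q.2 * x^(b+2*q.2))
      = Ac a q.1 * Ac b q.2 * (x^(a+2*q.1) * x^(b+2*q.2)) := by ring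
    _ = Ac a q.1 * Ac b q.2 * x^(a+b+2*p) := by rw [← pow_add, he]

lemma Fk_eq (l : ℕ) (x : ℝ) : Fk (l+1) (2*x) = ∑' p, Fc l p * x^(2*(l+1)+2*p) := by
  rw [Fk, ← tsum_mul_left]
  refine tsum_congr fun p => ?_
  have hidx : l + 1 - 1 + p = l + p := by omega
  rw [hidx, mul_pow, Fc]
  ring

/-- For integer `k ≥ 1` and real `x ≠ 0`,
`F_k(2x) = x² j_k(x)² + x² j_{k-1}(x)² − 2k x j_k(x) j_{k-1}(x)`. -/
theorem F_eq_sphBessel (k : ℕ) (hk : 1 ≤ k) (x : ℝ) (hx : x ≠ 0) :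
    Fk k (2 * x) =
      x ^ 2 * sphBessel k x ^ 2 + x ^ 2 * sphBessel (k - 1) x ^ 2 -
        2 * k * x * sphBessel k x * sphBessel (k - 1) x := by
  obtain ⟨l, rfl⟩ : ∃ l, k = l + 1 := ⟨k - 1, by omega⟩
  have hk1 : l + 1 - 1 = l := by omega
  rw [hk1]
  have h1 : sphBessel (l+1) x ^ 2 = ∑' p, CP (l+1) (l+1) p * x^((l+1)+(l+1)+2*p) := by
    rw [sq, sph_mul]
  have h2 : sphBessel l x ^ 2 = ∑' p, CP l l p * x^(l+l+2*p) := by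
    rw [sq, sph_mul]
  have h3 : 2 * ((l+1 : ℕ):ℝ) * x * sphBessel (l+1) x * sphBessel l x
      = (2 * ((l+1 : ℕ):ℝ) * x) * ∑' p, CP (l+1) l p * x^((l+1)+l+2*p) := by
    rw [← sph_mul]; ring
  rw [h1, h2, h3, Fk_eq, ← tsum_mul_left, ← tsum_mul_left, ← tsum_mul_left]
  -- normalized forms of the three pieces
  have e1 : ∀ p : ℕ, x^2 * (CP (l+1) (l+1) p * x^((l+1)+(l+1)+2*p))
      = CP (l+1) (l+1) p * x^(2*(l+1)+2*(p+1)) := by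
    intro p
    have he : 2 + ((l+1)+(l+1)+2*p) = 2*(l+1)+2*(p+1) := by omega
    calc x^2 * (CP (l+1) (l+1) p * x^((l+1)+(l+1)+2*p))
        = CP (l+1) (l+1) p * (x^2 * x^((l+1)+(l+1)+2*p)) := by ring
      _ = CP (l+1) (l+1) p * x^(2*(l+1)+2*(p+1)) := by rw [← pow_add, he]
  have e2 : ∀ p : ℕ, x^2 * (CP l l p * x^(l+l+2*p))
      = CP l l p * x^(2*(l+1)+2*p) := by
    intro p
    have he : 2 + (l+l+2*p) = 2*(l+1)+2*p := by omega
    calc x^2 * (CP l l p * x^(l+l+2*p))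
        = CP l l p * (x^2 * x^(l+l+2*p)) := by ring
      _ = CP l l p * x^(2*(l+1)+2*p) := by rw [← pow_add, he]
  have e3 : ∀ p : ℕ, (2 * ((l+1 : ℕ):ℝ) * x) * (CP (l+1) l p * x^((l+1)+l+2*p))
      = 2*((l:ℝ)+1) * CP (l+1) l p * x^(2*(l+1)+2*p) := by
    intro p
    have he : 1 + ((l+1)+l+2*p) = 2*(l+1)+2*p := by omega
    calc (2 * ((l+1 : ℕ):ℝ) * x) * (CP (l+1) l p * x^((l+1)+l+2*p))
        = 2*((l+1 : ℕ):ℝ) * CP (l+1) l p * (x^1 * x^((l+1)+l+2*p)) := by ring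
      _ = 2*((l+1 : ℕ):ℝ) * CP (l+1) l p * x^(2*(l+1)+2*p) := by rw [← pow_add, he]
      _ = 2*((l:ℝ)+1) * CP (l+1) l p * x^(2*(l+1)+2*p) := by push_cast; ring
  -- summabilities
  have hs1 : Summable (fun p => CP (l+1) (l+1) p * x^(2*(l+1)+2*(p+1))) :=
    ((sph_mul_summable (l+1) (l+1) x).mul_left (x^2)).congr e1
  have hs2 : Summable (fun p => CP l l p * x^(2*(l+1)+2*p)) :=
    ((sph_mul_summable l l x).mul_left (x^2)).congr e2
  have hs3 : Summable (fun p => 2*((l:ℝ)+1) * CP (l+1) l p * x^(2*(l+1)+2*p)) :=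
    ((sph_mul_summable (l+1) l x).mul_left (2 * ((l+1 : ℕ):ℝ) * x)).congr e3
  -- the shifted series
  have hV : Summable (fun p => if p = 0 then (0:ℝ) else CP (l+1) (l+1) (p-1) * x^(2*(l+1)+2*p)) := by
    refine (summable_nat_add_iff 1).mp (hs1.congr fun p => ?_)
    simp
  have hVt : ∑' p, CP (l+1) (l+1) p * x^(2*(l+1)+2*(p+1))
      = ∑' p, (if p = 0 then (0:ℝ) else CP (l+1) (l+1) (p-1) * x^(2*(l+1)+2*p)) := by
    rw [Summable.tsum_eq_zero_add hV]
    simp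
  rw [tsum_congr e1, tsum_congr e2, tsum_congr e3, hVt,
    ← Summable.tsum_add hV hs2, ← Summable.tsum_sub (hV.add hs2) hs3]
  refine tsum_congr fun p => ?_
  rcases p with _ | p
  · rw [if_pos rfl, ← coeff0]
    ring
  · rw [if_neg (Nat.succ_ne_zero p), Nat.add_sub_cancel, ← coeffS]
    ring
end
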